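/- Let p and q be coprime positive integers. Let g ∈ ℂ⟦x⟧[y] be such that p divides q·j − i for every monomial x^i y^j appearing in g (i.e., g is invariant under the cyclic action ξ·(x,y) = (ξ^{−1}x, ξ^{q}y) of the p-th roots of unity). Then for every natural number n ≥ deg_y(g), there exists h ∈ ℂ⟦x⟧[y] such that every monomial x^i y^j appearing in h satisfies p·i + q·j ≥ p·q·n, and h(x^p, x^q y) = x^{p·q·n} · g(x,y) in ℂ⟦x⟧[y]. -/

import Mathlib

open Polynomial PowerSeries

/-- The substitution `f(x,y) ↦ f(x^p, x^q y)` on `ℂ⟦x⟧[y]`: writing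
`f = Σ a_{ij} x^i y^j`, it is `Σ a_{ij} x^{p·i+q·j} y^j`. The coefficient of `y^j`
is `x^{q·j} · (coeff_j f)(x^p)`. -/
noncomputable def substPQ (p q : ℕ) (f : Polynomial (PowerSeries ℂ)) :
    Polynomial (PowerSeries ℂ) :=
  ∑ j ∈ f.support,
    Polynomial.monomial j
      ((PowerSeries.X : PowerSeries ℂ) ^ (q * j) *
        PowerSeries.mk fun m =>
          if p ∣ m then PowerSeries.coeff (R := ℂ) (m / p) (f.coeff j) else 0)

/-- The key inclusion in `R·I_{p,q}^n = R¹·x^{pqn}` (Lemma 4.14), at the level of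
representatives: if `g ∈ ℂ⟦x⟧[y]` is invariant under the cyclic action of the `p`-th roots
of unity on `X(p;−1,q)` (i.e. `p ∣ q·j − i` for every monomial `x^i y^j` appearing in `g`),
then for every `n ≥ deg_y g` there exists `h ∈ ℂ⟦x⟧[y]`, all of whose monomials `x^i y^j`
satisfy `p·i + q·j ≥ p·q·n`, with `h(x^p, x^q y) = x^{p·q·n} · g(x,y)`. -/
theorem invariant_mul_xpqn_is_pullback (p q : ℕ) (hp : 0 < p) (hq : 0 < q)
    (hpq : Nat.Coprime p q) (g : Polynomial (PowerSeries ℂ))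
    (hinv : ∀ i j : ℕ, PowerSeries.coeff (R := ℂ) i (g.coeff j) ≠ 0 → (p : ℤ) ∣ (q * j - i : ℤ))
    (n : ℕ) (hn : g.natDegree ≤ n) :
    ∃ h : Polynomial (PowerSeries ℂ),
      (∀ i j : ℕ, PowerSeries.coeff (R := ℂ) i (h.coeff j) ≠ 0 → p * q * n ≤ p * i + q * j) ∧
      substPQ p q h = Polynomial.C ((PowerSeries.X : PowerSeries ℂ) ^ (p * q * n)) * g := by
  classical
  set N := p * q * n with hN
  set c : ℕ → PowerSeries ℂ := fun j => PowerSeries.mk fun k =>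
    if N ≤ p * k + q * j then PowerSeries.coeff (R := ℂ) (p * k + q * j - N) (g.coeff j) else 0
    with hc
  set h : Polynomial (PowerSeries ℂ) := ∑ j ∈ g.support, Polynomial.monomial j (c j) with hh
  have hcoeff : ∀ j, h.coeff j = if j ∈ g.support then c j else 0 := by
    intro j
    rw [hh, Polynomial.finset_sum_coeff]
    simp [Polynomial.coeff_monomial]
  refine ⟨h, ?_, ?_⟩
  · intro i j hne
    rw [hcoeff] at hne
    by_cases hjs : j ∈ g.support
    · rw [if_pos hjs, hc] at hne
      simp only [PowerSeries.coeff_mk] at hne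
      by_contra hcon
      rw [if_neg hcon] at hne
      exact hne rfl
    · rw [if_neg hjs] at hne
      simp at hne
  · -- support of h is contained in support of g
    have hsub : h.support ⊆ g.support := by
      intro j hj
      rw [Polynomial.mem_support_iff, hcoeff] at hj
      by_contra hjs
      rw [if_neg hjs] at hj
      exact hj rfl
    have hjle : ∀ j ∈ g.support, q * j ≤ N := by
      intro j hj
      have hjn : j ≤ n := le_trans (Polynomial.le_natDegree_of_mem_supp j hj) hn
      calc q * j ≤ q * n := Nat.mul_le_mul_left q hjn
        _ ≤ p * (q * n) := Nat.le_mul_of_pos_left _ hp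
        _ = N := by rw [hN, mul_assoc]
    rw [substPQ]
    rw [Finset.sum_subset hsub]
    · conv_rhs => rw [g.as_sum_support]
      rw [Finset.mul_sum]
      refine Finset.sum_congr rfl fun j hj => ?_
      rw [Polynomial.C_mul_monomial]
      congr 1
      have hqjN : q * j ≤ N := hjle j hj
      ext m
      rw [PowerSeries.coeff_X_pow_mul', PowerSeries.coeff_X_pow_mul']
      by_cases h1 : q * j ≤ m
      · rw [if_pos h1]
        by_cases h2 : p ∣ m - q * j
        · rw [PowerSeries.coeff_mk, if_pos h2, hcoeff, if_pos hj, hc]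
          simp only [PowerSeries.coeff_mk]
          have hdm : p * ((m - q * j) / p) = m - q * j := Nat.mul_div_cancel' h2
          have heq : p * ((m - q * j) / p) + q * j = m := by omega
          rw [heq]
        · rw [PowerSeries.coeff_mk, if_neg h2]
          by_cases h3 : N ≤ m
          · rw [if_pos h3]
            by_contra hne
            have h4 := hinv (m - N) j (Ne.symm hne)
            have h5 : (p : ℤ) ∣ (m : ℤ) - q * j := by
              have hNc : (p : ℤ) ∣ (N : ℤ) := by
                rw [hN]; push_cast; exact ⟨q * n, by ring⟩
              have : ((m - N : ℕ) : ℤ) = (m : ℤ) - N := by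
                push_cast [h3]; ring
              rw [this] at h4
              have := dvd_sub hNc h4
              have h6 : (N : ℤ) - (q * j - ((m : ℤ) - N)) = (m : ℤ) - q * j := by ring
              rwa [h6] at this
            have : (p : ℤ) ∣ ((m - q * j : ℕ) : ℤ) := by
              rwa [Nat.cast_sub h1]
            exact h2 (by exact_mod_cast this)
          · rw [if_neg h3]
      · rw [if_neg h1, if_neg (by omega : ¬ N ≤ m)]
    · intro j hjg hjh
      have hz : h.coeff j = 0 := by
        rwa [Polynomial.mem_support_iff, not_not] at hjh
      rw [hz]
      have : (PowerSeries.mk fun m =>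
          if p ∣ m then PowerSeries.coeff (R := ℂ) (m / p) (0 : PowerSeries ℂ) else 0)
          = (0 : PowerSeries ℂ) := by
        ext m
        simp
      rw [this, mul_zero, map_zero]
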